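/- arXiv:1509.04193 — 4 statements merged into one kernel-verified Lean document; each statement's English description precedes it below -/
import Mathlib

section
/- Let t > 0 and let f : ℤ² → ℝ satisfy f(i,j) = 0 whenever i ≤ 0 or j ≤ 0, together with the harmonicity relation Σ_{-1≤k,ℓ≤1} p_{k,ℓ} f(i+k, j+ℓ) = t·f(i,j) for all i, j ≥ 1. Then, as an identity of formal power series in the two variables x and y, one has L(x,y)·H(x,y) = L(x,0)·H(x,0) + L(0,y)·H(0,y) − L(0,0)·f(1,1), where H(x,y) = Σ_{i,j≥1} f(i,j) x^{i−1} y^{j−1}, H(x,0) = Σ_{i≥1} f(i,1) x^{i−1}, H(0,y) = Σ_{j≥1} f(1,j) y^{j−1}, and where L(x,0) = γ(x), L(0,y) = γ̃(y), L(0,0) = p_{1,1}. -/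
open Finset Filter

/-- Cyclic list of the eight neighbor weights
`p₁,₁, p₁,₀, p₁,₋₁, p₀,₋₁, p₋₁,₋₁, p₋₁,₀, p₋₁,₁, p₀,₁`. -/
def cyc (p : ℤ → ℤ → ℝ) : Fin 8 → ℝ :=
  ![p 1 1, p 1 0, p 1 (-1), p 0 (-1), p (-1) (-1), p (-1) 0, p (-1) 1, p 0 1]

/-- The Laplace transform `φ(a₁,a₂) = Σ p_{k,ℓ} e^{k a₁ + ℓ a₂}` (small steps case). -/
noncomputable def phi (p : ℤ → ℤ → ℝ) (a : ℝ × ℝ) : ℝ :=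
  ∑ k ∈ Finset.Icc (-1 : ℤ) 1, ∑ l ∈ Finset.Icc (-1 : ℤ) 1,
    p k l * Real.exp (k * a.1 + l * a.2)

/-- `f` is `t`-harmonic for the walk with weights `p` killed at the boundary of the quadrant:
(1) harmonicity in the interior, (2) positivity in the interior, (3) vanishing on the boundary
and the exterior of the quadrant. -/
def THarmonic (p : ℤ → ℤ → ℝ) (t : ℝ) (f : ℤ → ℤ → ℝ) : Prop :=
  (∀ i j : ℤ, 1 ≤ i → 1 ≤ j →
    ∑ k ∈ Finset.Icc (-1 : ℤ) 1, ∑ l ∈ Finset.Icc (-1 : ℤ) 1,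
      p k l * f (i + k) (j + l) = t * f i j) ∧
  (∀ i j : ℤ, 1 ≤ i → 1 ≤ j → 0 < f i j) ∧
  (∀ i j : ℤ, i ≤ 0 ∨ j ≤ 0 → f i j = 0)

/-- The exponent `(a, b)` as a finitely supported function on `Fin 2`,
representing the monomial `x^a y^b`. -/
noncomputable def expo (a b : ℕ) : Fin 2 →₀ ℕ := Finsupp.single 0 a + Finsupp.single 1 b

/-- `H(x,y) = Σ_{i,j ≥ 1} f(i,j) x^{i−1} y^{j−1}` as a formal power series. -/
noncomputable def Hxy (f : ℤ → ℤ → ℝ) : MvPowerSeries (Fin 2) ℝ :=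
  fun d => f ((d 0 : ℤ) + 1) ((d 1 : ℤ) + 1)

/-- `H(x,0) = Σ_{i ≥ 1} f(i,1) x^{i−1}` as a formal power series. -/
noncomputable def Hx0 (f : ℤ → ℤ → ℝ) : MvPowerSeries (Fin 2) ℝ :=
  fun d => if d 1 = 0 then f ((d 0 : ℤ) + 1) 1 else 0

/-- `H(0,y) = Σ_{j ≥ 1} f(1,j) y^{j−1}` as a formal power series. -/
noncomputable def H0y (f : ℤ → ℤ → ℝ) : MvPowerSeries (Fin 2) ℝ :=
  fun d => if d 0 = 0 then f 1 ((d 1 : ℤ) + 1) else 0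

/-- The kernel `L(x,y) = Σ_{k,ℓ} p_{k,ℓ} x^{1−k} y^{1−ℓ} − t·xy` as a formal power series. -/
noncomputable def LSer (p : ℤ → ℤ → ℝ) (t : ℝ) : MvPowerSeries (Fin 2) ℝ :=
  (∑ k ∈ Finset.Icc (-1 : ℤ) 1, ∑ l ∈ Finset.Icc (-1 : ℤ) 1,
    (MvPowerSeries.monomial (R := ℝ) (expo (1 - k).toNat (1 - l).toNat)) (p k l))
  - (MvPowerSeries.monomial (R := ℝ) (expo 1 1)) t

/-- `L(x,0) = γ(x) = p₋₁,₁x² + p₀,₁x + p₁,₁` as a formal power series. -/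
noncomputable def LSerX (p : ℤ → ℤ → ℝ) : MvPowerSeries (Fin 2) ℝ :=
  (MvPowerSeries.monomial (R := ℝ) (expo 2 0)) (p (-1) 1) +
  (MvPowerSeries.monomial (R := ℝ) (expo 1 0)) (p 0 1) +
  (MvPowerSeries.monomial (R := ℝ) (expo 0 0)) (p 1 1)

/-- `L(0,y) = γ̃(y) = p₁,₋₁y² + p₁,₀y + p₁,₁` as a formal power series. -/
noncomputable def LSerY (p : ℤ → ℤ → ℝ) : MvPowerSeries (Fin 2) ℝ :=
  (MvPowerSeries.monomial (R := ℝ) (expo 0 2)) (p 1 (-1)) +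
  (MvPowerSeries.monomial (R := ℝ) (expo 0 1)) (p 1 0) +
  (MvPowerSeries.monomial (R := ℝ) (expo 0 0)) (p 1 1)


open MvPowerSeries

lemma expo_apply0 (a b : ℕ) : expo a b 0 = a := by simp [expo]
lemma expo_apply1 (a b : ℕ) : expo a b 1 = b := by simp [expo, Finsupp.single_apply]

lemma expo_le (a b : ℕ) (d : Fin 2 →₀ ℕ) : expo a b ≤ d ↔ a ≤ d 0 ∧ b ≤ d 1 := by
  constructor
  · intro h
    exact ⟨by simpa [expo_apply0] using h 0, by simpa [expo_apply1] using h 1⟩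
  · rintro ⟨h1, h2⟩ i
    fin_cases i
    · simpa [expo_apply0] using h1
    · simpa [expo_apply1] using h2

lemma sub_expo0 (a b : ℕ) (d : Fin 2 →₀ ℕ) : (d - expo a b) 0 = d 0 - a := by
  rw [Finsupp.tsub_apply, expo_apply0]
lemma sub_expo1 (a b : ℕ) (d : Fin 2 →₀ ℕ) : (d - expo a b) 1 = d 1 - b := by
  rw [Finsupp.tsub_apply, expo_apply1]

lemma eq_zero_iff (d : Fin 2 →₀ ℕ) : d = 0 ↔ d 0 = 0 ∧ d 1 = 0 := by
  constructor
  · intro h; simp [h]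
  · rintro ⟨h1, h2⟩; ext i; fin_cases i <;> simpa

lemma LSer_eq (p : ℤ → ℤ → ℝ) (t : ℝ) : LSer p t =
    (monomial (R := ℝ) (expo 2 2)) (p (-1) (-1)) + (monomial (R := ℝ) (expo 2 1)) (p (-1) 0)
  + (monomial (R := ℝ) (expo 2 0)) (p (-1) 1)
  + (monomial (R := ℝ) (expo 1 2)) (p 0 (-1)) + (monomial (R := ℝ) (expo 1 1)) (p 0 0)
  + (monomial (R := ℝ) (expo 1 0)) (p 0 1)
  + (monomial (R := ℝ) (expo 0 2)) (p 1 (-1)) + (monomial (R := ℝ) (expo 0 1)) (p 1 0)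
  + (monomial (R := ℝ) (expo 0 0)) (p 1 1)
  - (monomial (R := ℝ) (expo 1 1)) t := by
  unfold LSer
  rw [show Finset.Icc (-1:ℤ) 1 = {-1, 0, 1} from rfl]
  norm_num [Finset.sum_insert, Finset.mem_insert, Int.toNat_natCast, show ((2:ℤ)).toNat = 2 from rfl]
  ring

lemma coeff_Hxy (f : ℤ → ℤ → ℝ) (e : Fin 2 →₀ ℕ) :
    MvPowerSeries.coeff e (Hxy f) = f ((e 0 : ℤ) + 1) ((e 1 : ℤ) + 1) := rfl
lemma coeff_Hx0 (f : ℤ → ℤ → ℝ) (e : Fin 2 →₀ ℕ) :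
    MvPowerSeries.coeff e (Hx0 f) = if e 1 = 0 then f ((e 0 : ℤ) + 1) 1 else 0 := rfl
lemma coeff_H0y (f : ℤ → ℤ → ℝ) (e : Fin 2 →₀ ℕ) :
    MvPowerSeries.coeff e (H0y f) = if e 0 = 0 then f 1 ((e 1 : ℤ) + 1) else 0 := rfl

lemma keyH (f : ℤ → ℤ → ℝ) (hbdry : ∀ i j : ℤ, i ≤ 0 ∨ j ≤ 0 → f i j = 0)
    (c : ℝ) (a b : ℕ) (d : Fin 2 →₀ ℕ) :
    (if expo a b ≤ d then
        c * f ((((d - expo a b) 0 : ℕ) : ℤ) + 1) ((((d - expo a b) 1 : ℕ) : ℤ) + 1)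
      else 0)
      = c * f ((d 0 : ℤ) + 1 - a) ((d 1 : ℤ) + 1 - b) := by
  simp only [expo_le, sub_expo0, sub_expo1]
  split_ifs with h
  · obtain ⟨h1, h2⟩ := h
    rw [show ((d 0 - a : ℕ) : ℤ) + 1 = (d 0 : ℤ) + 1 - a from by omega,
        show ((d 1 - b : ℕ) : ℤ) + 1 = (d 1 : ℤ) + 1 - b from by omega]
  · rw [not_and_or, not_le, not_le] at h
    rcases h with h | h
    · rw [hbdry _ _ (Or.inl (by omega)), mul_zero]
    · rw [hbdry _ _ (Or.inr (by omega)), mul_zero]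

lemma keyX (f : ℤ → ℤ → ℝ) (hbdry : ∀ i j : ℤ, i ≤ 0 ∨ j ≤ 0 → f i j = 0)
    (c : ℝ) (a : ℕ) (d : Fin 2 →₀ ℕ) :
    (if expo a 0 ≤ d then
        c * (if (d - expo a 0) 1 = 0 then f ((((d - expo a 0) 0 : ℕ) : ℤ) + 1) 1 else 0)
      else 0)
      = (if d 1 = 0 then c * f ((d 0 : ℤ) + 1 - a) 1 else 0) := by
  simp only [expo_le, sub_expo0, sub_expo1, Nat.sub_zero]
  by_cases hn : d 1 = 0
  · by_cases ha : a ≤ d 0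
    · rw [if_pos ⟨ha, Nat.zero_le _⟩, if_pos hn, if_pos hn,
        show ((d 0 - a : ℕ) : ℤ) + 1 = (d 0 : ℤ) + 1 - a from by omega]
    · rw [if_neg (by tauto), if_pos hn, hbdry _ _ (Or.inl (by omega)), mul_zero]
  · by_cases ha : a ≤ d 0
    · rw [if_pos ⟨ha, Nat.zero_le _⟩, if_neg hn, mul_zero, if_neg hn]
    · rw [if_neg (by tauto), if_neg hn]

lemma keyY (f : ℤ → ℤ → ℝ) (hbdry : ∀ i j : ℤ, i ≤ 0 ∨ j ≤ 0 → f i j = 0)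
    (c : ℝ) (b : ℕ) (d : Fin 2 →₀ ℕ) :
    (if expo 0 b ≤ d then
        c * (if (d - expo 0 b) 0 = 0 then f 1 ((((d - expo 0 b) 1 : ℕ) : ℤ) + 1) else 0)
      else 0)
      = (if d 0 = 0 then c * f 1 ((d 1 : ℤ) + 1 - b) else 0) := by
  simp only [expo_le, sub_expo0, sub_expo1, Nat.sub_zero]
  by_cases hm : d 0 = 0
  · by_cases hb : b ≤ d 1
    · rw [if_pos ⟨Nat.zero_le _, hb⟩, if_pos hm, if_pos hm,
        show ((d 1 - b : ℕ) : ℤ) + 1 = (d 1 : ℤ) + 1 - b from by omega]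
    · rw [if_neg (by tauto), if_pos hm, hbdry _ _ (Or.inr (by omega)), mul_zero]
  · by_cases hb : b ≤ d 1
    · rw [if_pos ⟨Nat.zero_le _, hb⟩, if_neg hm, mul_zero, if_neg hm]
    · rw [if_neg (by tauto), if_neg hm]

/-- the fundamental functional equation
`L(x,y)H(x,y) = L(x,0)H(x,0) + L(0,y)H(0,y) − L(0,0)f(1,1)`
as an identity of formal power series in two variables. -/
theorem functional_equation (p : ℤ → ℤ → ℝ)
    (hpos : ∀ k l : ℤ, 0 ≤ p k l)
    (hsum : ∑ k ∈ Finset.Icc (-1 : ℤ) 1, ∑ l ∈ Finset.Icc (-1 : ℤ) 1, p k l = 1)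
    (hp00 : p 0 0 = 0)
    (hsmall : ∀ k l : ℤ, (1 < |k| ∨ 1 < |l|) → p k l = 0)
    (hnz : ∀ i : Fin 8, cyc p i ≠ 0 ∨ cyc p (i + 1) ≠ 0 ∨ cyc p (i + 2) ≠ 0)
    (t : ℝ) (ht : 0 < t)
    (f : ℤ → ℤ → ℝ)
    (hbdry : ∀ i j : ℤ, i ≤ 0 ∨ j ≤ 0 → f i j = 0)
    (hharm : ∀ i j : ℤ, 1 ≤ i → 1 ≤ j →
      ∑ k ∈ Finset.Icc (-1 : ℤ) 1, ∑ l ∈ Finset.Icc (-1 : ℤ) 1,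
        p k l * f (i + k) (j + l) = t * f i j) :
    LSer p t * Hxy f =
      LSerX p * Hx0 f + LSerY p * H0y f -
        MvPowerSeries.C (σ := Fin 2) (R := ℝ) (p 1 1 * f 1 1) := by
  ext d
  rw [LSer_eq]
  simp only [LSerX, LSerY, sub_mul, add_mul, map_sub, map_add,
    MvPowerSeries.coeff_monomial_mul, coeff_Hxy, coeff_Hx0, coeff_H0y,
    MvPowerSeries.coeff_C, eq_zero_iff,
    keyH f hbdry, keyX f hbdry, keyY f hbdry]
  have fL : ∀ j : ℤ, f (-1) j = 0 := fun j => hbdry _ _ (Or.inl (by norm_num))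
  have f0 : ∀ j : ℤ, f 0 j = 0 := fun j => hbdry _ _ (Or.inl le_rfl)
  have fB1 : ∀ i : ℤ, f i (-1) = 0 := fun i => hbdry _ _ (Or.inr (by norm_num))
  have fB0 : ∀ i : ℤ, f i 0 = 0 := fun i => hbdry _ _ (Or.inr le_rfl)
  have h9 : ∀ i j : ℤ, 1 ≤ i → 1 ≤ j →
      p (-1) (-1) * f (i-1) (j-1) + p (-1) 0 * f (i-1) j + p (-1) 1 * f (i-1) (j+1)
      + p 0 (-1) * f i (j-1) + p 0 0 * f i j + p 0 1 * f i (j+1)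
      + p 1 (-1) * f (i+1) (j-1) + p 1 0 * f (i+1) j + p 1 1 * f (i+1) (j+1)
      = t * f i j := by
    intro i j h1 h2
    have h := hharm i j h1 h2
    rw [show Finset.Icc (-1:ℤ) 1 = {-1, 0, 1} from rfl] at h
    norm_num [Finset.sum_insert, Finset.mem_insert, ← sub_eq_add_neg] at h
    linear_combination h
  by_cases hm : d 0 = 0 <;> by_cases hn : d 1 = 0
  · simp only [hm, hn, if_pos, and_self, if_true, Nat.cast_zero]
    norm_num [fL, f0, fB1, fB0]
  · simp only [hm, hn, if_true, if_false, and_false, if_neg, Nat.cast_zero]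
    norm_num [fL, f0]
  · simp only [hm, hn, if_true, if_false, and_false, if_neg, Nat.cast_zero]
    norm_num [fB1, fB0]
  · have h1 : 1 ≤ (d 0 : ℤ) := by omega
    have h2 : 1 ≤ (d 1 : ℤ) := by omega
    have H := h9 (d 0) (d 1) h1 h2
    simp only [if_neg hm, if_neg hn, if_neg (show ¬(d 0 = 0 ∧ d 1 = 0) by tauto)]
    push_cast
    ring_nf
    ring_nf at H
    linear_combination H
end

section
/- Under assumptions (a) and (b), the function φ(a₁,a₂) = Σ_{k,ℓ} p_{k,ℓ} e^{k a₁ + ℓ a₂} is strictly convex on ℝ² and attains a global minimum at a unique point of ℝ². -/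
open Finset Filter

/-! ### Auxiliary definitions and lemmas -/

/-- First coordinates of the eight step directions, in the cyclic order of `cyc`. -/
def vX : Fin 8 → ℝ := ![1,1,1,0,-1,-1,-1,0]
/-- Second coordinates of the eight step directions, in the cyclic order of `cyc`. -/
def vY : Fin 8 → ℝ := ![1,0,-1,-1,-1,0,1,1]

@[simp] lemma vX_0 : vX 0 = 1 := rfl
@[simp] lemma vX_1 : vX 1 = 1 := rfl
@[simp] lemma vX_2 : vX 2 = 1 := rfl
@[simp] lemma vX_3 : vX 3 = 0 := rfl
@[simp] lemma vX_4 : vX 4 = -1 := rfl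
@[simp] lemma vX_5 : vX 5 = -1 := rfl
@[simp] lemma vX_6 : vX 6 = -1 := rfl
@[simp] lemma vX_7 : vX 7 = 0 := rfl
@[simp] lemma vX_8 : vX 8 = 1 := rfl
@[simp] lemma vX_9 : vX 9 = 1 := rfl
@[simp] lemma vY_0 : vY 0 = 1 := rfl
@[simp] lemma vY_1 : vY 1 = 0 := rfl
@[simp] lemma vY_2 : vY 2 = -1 := rfl
@[simp] lemma vY_3 : vY 3 = -1 := rfl
@[simp] lemma vY_4 : vY 4 = -1 := rfl
@[simp] lemma vY_5 : vY 5 = 0 := rfl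
@[simp] lemma vY_6 : vY 6 = 1 := rfl
@[simp] lemma vY_7 : vY 7 = 1 := rfl
@[simp] lemma vY_8 : vY 8 = 1 := rfl
@[simp] lemma vY_9 : vY 9 = 0 := rfl

/-- `phi` rewritten as a sum over the eight neighbor directions. -/
noncomputable def phi8 (p : ℤ → ℤ → ℝ) (a : ℝ × ℝ) : ℝ :=
  ∑ j : Fin 8, cyc p j * Real.exp (vX j * a.1 + vY j * a.2)

lemma phi8_apply (p : ℤ → ℤ → ℝ) (a : ℝ × ℝ) :
    phi8 p a = p 1 1 * Real.exp (a.1 + a.2) + p 1 0 * Real.exp a.1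
      + p 1 (-1) * Real.exp (a.1 - a.2) + p 0 (-1) * Real.exp (-a.2)
      + p (-1) (-1) * Real.exp (-a.1 - a.2) + p (-1) 0 * Real.exp (-a.1)
      + p (-1) 1 * Real.exp (-a.1 + a.2) + p 0 1 * Real.exp a.2 := by
  rw [phi8, Fin.sum_univ_eight]
  show p 1 1 * Real.exp ((1:ℝ) * a.1 + 1 * a.2) + p 1 0 * Real.exp ((1:ℝ) * a.1 + 0 * a.2)
    + p 1 (-1) * Real.exp ((1:ℝ) * a.1 + (-1) * a.2) + p 0 (-1) * Real.exp ((0:ℝ) * a.1 + (-1) * a.2)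
    + p (-1) (-1) * Real.exp ((-1:ℝ) * a.1 + (-1) * a.2) + p (-1) 0 * Real.exp ((-1:ℝ) * a.1 + 0 * a.2)
    + p (-1) 1 * Real.exp ((-1:ℝ) * a.1 + 1 * a.2) + p 0 1 * Real.exp ((0:ℝ) * a.1 + 1 * a.2) = _
  ring_nf

lemma phi_eq (p : ℤ → ℤ → ℝ) (hp00 : p 0 0 = 0) : phi p = phi8 p := by
  funext a
  have h : Finset.Icc (-1 : ℤ) 1 = {-1, 0, 1} := rfl
  rw [phi8_apply]
  simp [phi, h, hp00]
  ring_nf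

lemma cyc_nonneg (p : ℤ → ℤ → ℝ) (hpos : ∀ k l : ℤ, 0 ≤ p k l) (j : Fin 8) :
    0 ≤ cyc p j := by
  fin_cases j <;> exact hpos _ _

/-- For every direction `(x, y)`, three consecutive step directions have inner product with
`(x, y)` at least `max |x| |y| / 2`. -/
lemma triple (x y : ℝ) : ∃ i : Fin 8,
    max |x| |y| / 2 ≤ vX i * x + vY i * y ∧
    max |x| |y| / 2 ≤ vX (i + 1) * x + vY (i + 1) * y ∧
    max |x| |y| / 2 ≤ vX (i + 2) * x + vY (i + 2) * y := by
  rcases le_or_gt 0 x with hx | hx <;> rcases le_or_gt 0 y with hy | hy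
  · rcases le_or_gt x (2*y) with h1 | h1
    · rcases le_or_gt y (2*x) with h2 | h2
      · refine ⟨7, ?_, ?_, ?_⟩ <;> simp only [Fin.reduceAdd, vX_0, vX_1, vX_2, vX_3, vX_4, vX_5, vX_6, vX_7, vY_0, vY_1, vY_2, vY_3, vY_4, vY_5, vY_6, vY_7] <;> norm_num <;>
          rcases max_cases |x| |y| with ⟨h3, _⟩ | ⟨h3, _⟩ <;>
          rw [h3, abs_of_nonneg (by linarith)] <;> linarith
      · refine ⟨6, ?_, ?_, ?_⟩ <;> simp only [Fin.reduceAdd, vX_0, vX_1, vX_2, vX_3, vX_4, vX_5, vX_6, vX_7, vY_0, vY_1, vY_2, vY_3, vY_4, vY_5, vY_6, vY_7] <;> norm_num <;>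
          rcases max_cases |x| |y| with ⟨h3, _⟩ | ⟨h3, _⟩ <;>
          rw [h3, abs_of_nonneg (by linarith)] <;> linarith
    · refine ⟨0, ?_, ?_, ?_⟩ <;> simp only [Fin.reduceAdd, vX_0, vX_1, vX_2, vX_3, vX_4, vX_5, vX_6, vX_7, vY_0, vY_1, vY_2, vY_3, vY_4, vY_5, vY_6, vY_7] <;> norm_num <;>
        rcases max_cases |x| |y| with ⟨h3, _⟩ | ⟨h3, _⟩ <;>
        rw [h3, abs_of_nonneg (by linarith)] <;> linarith
  · rcases le_or_gt x (-2*y) with h1 | h1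
    · rcases le_or_gt (-y) (2*x) with h2 | h2
      · refine ⟨1, ?_, ?_, ?_⟩ <;> simp only [Fin.reduceAdd, vX_0, vX_1, vX_2, vX_3, vX_4, vX_5, vX_6, vX_7, vY_0, vY_1, vY_2, vY_3, vY_4, vY_5, vY_6, vY_7] <;> norm_num <;>
          rcases max_cases |x| |y| with ⟨h3, _⟩ | ⟨h3, _⟩ <;>
          first
          | (rw [h3, abs_of_nonneg (by linarith)]; linarith)
          | (rw [h3, abs_of_nonpos (by linarith)]; linarith)
      · refine ⟨2, ?_, ?_, ?_⟩ <;> simp only [Fin.reduceAdd, vX_0, vX_1, vX_2, vX_3, vX_4, vX_5, vX_6, vX_7, vY_0, vY_1, vY_2, vY_3, vY_4, vY_5, vY_6, vY_7] <;> norm_num <;>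
          rcases max_cases |x| |y| with ⟨h3, _⟩ | ⟨h3, _⟩ <;>
          first
          | (rw [h3, abs_of_nonneg (by linarith)]; linarith)
          | (rw [h3, abs_of_nonpos (by linarith)]; linarith)
    · refine ⟨0, ?_, ?_, ?_⟩ <;> simp only [Fin.reduceAdd, vX_0, vX_1, vX_2, vX_3, vX_4, vX_5, vX_6, vX_7, vY_0, vY_1, vY_2, vY_3, vY_4, vY_5, vY_6, vY_7] <;> norm_num <;>
        rcases max_cases |x| |y| with ⟨h3, _⟩ | ⟨h3, _⟩ <;>
        first
        | (rw [h3, abs_of_nonneg (by linarith)]; linarith)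
        | (rw [h3, abs_of_nonpos (by linarith)]; linarith)
  · rcases le_or_gt (-x) (2*y) with h1 | h1
    · rcases le_or_gt y (-2*x) with h2 | h2
      · refine ⟨5, ?_, ?_, ?_⟩ <;> simp only [Fin.reduceAdd, vX_0, vX_1, vX_2, vX_3, vX_4, vX_5, vX_6, vX_7, vY_0, vY_1, vY_2, vY_3, vY_4, vY_5, vY_6, vY_7] <;> norm_num <;>
          rcases max_cases |x| |y| with ⟨h3, _⟩ | ⟨h3, _⟩ <;>
          first
          | (rw [h3, abs_of_nonneg (by linarith)]; linarith)
          | (rw [h3, abs_of_nonpos (by linarith)]; linarith)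
      · refine ⟨6, ?_, ?_, ?_⟩ <;> simp only [Fin.reduceAdd, vX_0, vX_1, vX_2, vX_3, vX_4, vX_5, vX_6, vX_7, vY_0, vY_1, vY_2, vY_3, vY_4, vY_5, vY_6, vY_7] <;> norm_num <;>
          rcases max_cases |x| |y| with ⟨h3, _⟩ | ⟨h3, _⟩ <;>
          first
          | (rw [h3, abs_of_nonneg (by linarith)]; linarith)
          | (rw [h3, abs_of_nonpos (by linarith)]; linarith)
    · refine ⟨4, ?_, ?_, ?_⟩ <;> simp only [Fin.reduceAdd, vX_0, vX_1, vX_2, vX_3, vX_4, vX_5, vX_6, vX_7, vY_0, vY_1, vY_2, vY_3, vY_4, vY_5, vY_6, vY_7] <;> norm_num <;>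
        rcases max_cases |x| |y| with ⟨h3, _⟩ | ⟨h3, _⟩ <;>
        first
        | (rw [h3, abs_of_nonneg (by linarith)]; linarith)
        | (rw [h3, abs_of_nonpos (by linarith)]; linarith)
  · rcases le_or_gt (-x) (-2*y) with h1 | h1
    · rcases le_or_gt (-y) (-2*x) with h2 | h2
      · refine ⟨3, ?_, ?_, ?_⟩ <;> simp only [Fin.reduceAdd, vX_0, vX_1, vX_2, vX_3, vX_4, vX_5, vX_6, vX_7, vY_0, vY_1, vY_2, vY_3, vY_4, vY_5, vY_6, vY_7] <;> norm_num <;>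
          rcases max_cases |x| |y| with ⟨h3, _⟩ | ⟨h3, _⟩ <;>
          rw [h3, abs_of_nonpos (by linarith)] <;> linarith
      · refine ⟨2, ?_, ?_, ?_⟩ <;> simp only [Fin.reduceAdd, vX_0, vX_1, vX_2, vX_3, vX_4, vX_5, vX_6, vX_7, vY_0, vY_1, vY_2, vY_3, vY_4, vY_5, vY_6, vY_7] <;> norm_num <;>
          rcases max_cases |x| |y| with ⟨h3, _⟩ | ⟨h3, _⟩ <;>
          rw [h3, abs_of_nonpos (by linarith)] <;> linarith
    · refine ⟨4, ?_, ?_, ?_⟩ <;> simp only [Fin.reduceAdd, vX_0, vX_1, vX_2, vX_3, vX_4, vX_5, vX_6, vX_7, vY_0, vY_1, vY_2, vY_3, vY_4, vY_5, vY_6, vY_7] <;> norm_num <;>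
        rcases max_cases |x| |y| with ⟨h3, _⟩ | ⟨h3, _⟩ <;>
        rw [h3, abs_of_nonpos (by linarith)] <;> linarith

/-- Key lemma: for every direction there is a step with positive weight whose inner product
with the direction is at least `max |x| |y| / 2`. -/
lemma key (p : ℤ → ℤ → ℝ) (hpos : ∀ k l : ℤ, 0 ≤ p k l)
    (hnz : ∀ i : Fin 8, cyc p i ≠ 0 ∨ cyc p (i + 1) ≠ 0 ∨ cyc p (i + 2) ≠ 0)
    (x y : ℝ) :
    ∃ j : Fin 8, 0 < cyc p j ∧ max |x| |y| / 2 ≤ vX j * x + vY j * y := by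
  obtain ⟨i, h0, h1, h2⟩ := triple x y
  rcases hnz i with h | h | h
  · exact ⟨i, lt_of_le_of_ne (cyc_nonneg p hpos i) (Ne.symm h), h0⟩
  · exact ⟨i + 1, lt_of_le_of_ne (cyc_nonneg p hpos (i + 1)) (Ne.symm h), h1⟩
  · exact ⟨i + 2, lt_of_le_of_ne (cyc_nonneg p hpos (i + 2)) (Ne.symm h), h2⟩

/-- under assumptions (a) and (b), `φ` is strictly convex on `ℝ²` and attains a
global minimum at a unique point of `ℝ²`. -/
theorem phi_strictConvexOn_and_unique_global_min (p : ℤ → ℤ → ℝ)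
    (hpos : ∀ k l : ℤ, 0 ≤ p k l)
    (hsum : ∑ k ∈ Finset.Icc (-1 : ℤ) 1, ∑ l ∈ Finset.Icc (-1 : ℤ) 1, p k l = 1)
    (hp00 : p 0 0 = 0)
    (hsmall : ∀ k l : ℤ, (1 < |k| ∨ 1 < |l|) → p k l = 0)
    (hnz : ∀ i : Fin 8, cyc p i ≠ 0 ∨ cyc p (i + 1) ≠ 0 ∨ cyc p (i + 2) ≠ 0) :
    StrictConvexOn ℝ Set.univ (phi p) ∧
    ∃! a : ℝ × ℝ, ∀ b : ℝ × ℝ, phi p a ≤ phi p b := by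
  have heq := phi_eq p hp00
  have hc : ∀ j : Fin 8, 0 ≤ cyc p j := cyc_nonneg p hpos
  -- strict convexity
  have hsc : StrictConvexOn ℝ Set.univ (phi p) := by
    rw [heq]
    refine ⟨convex_univ, fun x _ y _ hxy a b ha hb hab => ?_⟩
    simp only [phi8, smul_eq_mul, Prod.fst_add, Prod.snd_add, Prod.smul_fst, Prod.smul_snd,
      smul_eq_mul, Finset.mul_sum]
    rw [← Finset.sum_add_distrib]
    apply Finset.sum_lt_sum
    · intro j _
      have h := convexOn_exp.2 (Set.mem_univ (vX j * x.1 + vY j * x.2))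
        (Set.mem_univ (vX j * y.1 + vY j * y.2)) ha.le hb.le hab
      simp only [smul_eq_mul] at h
      have harg : vX j * (a * x.1 + b * y.1) + vY j * (a * x.2 + b * y.2)
          = a * (vX j * x.1 + vY j * x.2) + b * (vX j * y.1 + vY j * y.2) := by ring
      rw [harg]
      calc cyc p j * Real.exp (a * (vX j * x.1 + vY j * x.2) + b * (vX j * y.1 + vY j * y.2))
          ≤ cyc p j * (a * Real.exp (vX j * x.1 + vY j * x.2)
              + b * Real.exp (vX j * y.1 + vY j * y.2)) :=
            mul_le_mul_of_nonneg_left h (hc j)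
        _ = a * (cyc p j * Real.exp (vX j * x.1 + vY j * x.2))
              + b * (cyc p j * Real.exp (vX j * y.1 + vY j * y.2)) := by ring
    · obtain ⟨j, hj, hd⟩ := key p hpos hnz (x.1 - y.1) (x.2 - y.2)
      have hne1 : x.1 ≠ y.1 ∨ x.2 ≠ y.2 := by
        by_contra h; push_neg at h; exact hxy (Prod.ext h.1 h.2)
      have hM : 0 < max |x.1 - y.1| |x.2 - y.2| := by
        rcases hne1 with h | h
        · exact lt_max_iff.mpr (Or.inl (abs_pos.mpr (sub_ne_zero.mpr h)))
        · exact lt_max_iff.mpr (Or.inr (abs_pos.mpr (sub_ne_zero.mpr h)))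
      have hlt : 0 < vX j * (x.1 - y.1) + vY j * (x.2 - y.2) :=
        lt_of_lt_of_le (by linarith) hd
      have hne' : vX j * x.1 + vY j * x.2 ≠ vX j * y.1 + vY j * y.2 := by
        intro hcon
        have h2 : vX j * (x.1 - y.1) + vY j * (x.2 - y.2)
            = (vX j * x.1 + vY j * x.2) - (vX j * y.1 + vY j * y.2) := by ring
        rw [h2, hcon, sub_self] at hlt
        exact lt_irrefl 0 hlt
      refine ⟨j, Finset.mem_univ j, ?_⟩
      have hstrict := strictConvexOn_exp.2 (Set.mem_univ (vX j * x.1 + vY j * x.2))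
        (Set.mem_univ (vX j * y.1 + vY j * y.2)) hne' ha hb hab
      simp only [smul_eq_mul] at hstrict
      have harg : vX j * (a * x.1 + b * y.1) + vY j * (a * x.2 + b * y.2)
          = a * (vX j * x.1 + vY j * x.2) + b * (vX j * y.1 + vY j * y.2) := by ring
      rw [harg]
      calc cyc p j * Real.exp (a * (vX j * x.1 + vY j * x.2) + b * (vX j * y.1 + vY j * y.2))
          < cyc p j * (a * Real.exp (vX j * x.1 + vY j * x.2)
              + b * Real.exp (vX j * y.1 + vY j * y.2)) :=
            (mul_lt_mul_iff_right₀ hj).2 hstrict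
        _ = a * (cyc p j * Real.exp (vX j * x.1 + vY j * x.2))
              + b * (cyc p j * Real.exp (vX j * y.1 + vY j * y.2)) := by ring
  -- continuity
  have hcont : Continuous (phi p) := by
    unfold phi
    apply continuous_finset_sum
    intro k _
    apply continuous_finset_sum
    intro l _
    fun_prop
  -- positive lower weight
  obtain ⟨j0, hj0, _⟩ := key p hpos hnz 0 0
  set T : Finset (Fin 8) := Finset.univ.filter (fun j => cyc p j ≠ 0) with hT
  have hTne : T.Nonempty := ⟨j0, by simp [hT, hj0.ne']⟩
  set q : ℝ := T.inf' hTne (cyc p) with hqdef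
  have hq : 0 < q := by
    rw [hqdef, Finset.lt_inf'_iff]
    intro b hb
    exact lt_of_le_of_ne (hc b) (Ne.symm (Finset.mem_filter.mp hb).2)
  -- coercive lower bound
  have hbound : ∀ z : ℝ × ℝ, q * Real.exp (‖z‖ / 2) ≤ phi p z := by
    intro z
    obtain ⟨j, hj, hd⟩ := key p hpos hnz z.1 z.2
    have hn : ‖z‖ = max |z.1| |z.2| := by
      rw [Prod.norm_def]; simp [Real.norm_eq_abs]
    rw [heq]
    have h1 : q * Real.exp (‖z‖ / 2) ≤ cyc p j * Real.exp (vX j * z.1 + vY j * z.2) := by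
      apply mul_le_mul (Finset.inf'_le _ (by simp [hT, hj.ne']))
        (Real.exp_le_exp.mpr (by rw [hn]; exact hd)) (Real.exp_pos _).le (hc j)
    refine h1.trans ?_
    rw [phi8]
    exact Finset.single_le_sum (f := fun i => cyc p i * Real.exp (vX i * z.1 + vY i * z.2))
      (fun i _ => mul_nonneg (hc i) (Real.exp_pos _).le) (Finset.mem_univ j)
  -- coercivity
  have htend : Tendsto (phi p) (cocompact (ℝ × ℝ)) atTop := by
    have h1 : Tendsto (fun t : ℝ => q * Real.exp (t / 2)) atTop atTop :=
      (Real.tendsto_exp_atTop.comp (tendsto_id.atTop_div_const two_pos)).const_mul_atTop hq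
    exact tendsto_atTop_mono hbound (h1.comp tendsto_norm_cocompact_atTop)
  obtain ⟨a, ha⟩ := hcont.exists_forall_le htend
  refine ⟨hsc, a, ha, fun b hb => ?_⟩
  by_contra hne
  have h1 : phi p b = phi p a := le_antisymm (hb a) (ha b)
  have h2 := hsc.2 (Set.mem_univ b) (Set.mem_univ a) hne
    (by norm_num : (0:ℝ) < 1/2) (by norm_num : (0:ℝ) < 1/2) (by norm_num)
  rw [smul_eq_mul, smul_eq_mul, h1] at h2
  have h3 := ha ((1/2 : ℝ) • b + (1/2 : ℝ) • a)
  linarith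
end

section
/- Let t > 0 and let p, p′ > 0 satisfy p_{1,0}/p + p_{-1,0}·p + p_{0,1}/p′ + p_{0,-1}·p′ = t, together with p² < p_{1,0}/p_{-1,0} and p′² < p_{0,1}/p_{0,-1}. Then the function f_p defined by f_p(i,j) = ((1/p)^i − (p_{-1,0}·p/p_{1,0})^i)·((1/p′)^j − (p_{0,-1}·p′/p_{0,1})^j) for i, j ≥ 1, and f_p(i,j) = 0 whenever i ≤ 0 or j ≤ 0, is a t-harmonic function: it satisfies conditions (1), (2) and (3). -/
/-- `f` is `t`-harmonic for the simple random walk with weights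
`p₁,₀, p₋₁,₀, p₀,₁, p₀,₋₁` killed at the boundary of the quadrant. -/
def THarmSimple (p10 pm10 p01 p0m1 t : ℝ) (f : ℤ → ℤ → ℝ) : Prop :=
  (∀ i j : ℤ, 1 ≤ i → 1 ≤ j →
    p10 * f (i + 1) j + pm10 * f (i - 1) j + p01 * f i (j + 1) + p0m1 * f i (j - 1)
      = t * f i j) ∧
  (∀ i j : ℤ, 1 ≤ i → 1 ≤ j → 0 < f i j) ∧
  (∀ i j : ℤ, i ≤ 0 ∨ j ≤ 0 → f i j = 0)

private lemma one_dim (P Q u : ℝ) (hP : P ≠ 0) (hQ : Q ≠ 0) (hu : u ≠ 0) (i : ℤ) :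
    P * ((1 / u) ^ (i + 1) - (Q * u / P) ^ (i + 1))
      + Q * ((1 / u) ^ (i - 1) - (Q * u / P) ^ (i - 1))
    = (P / u + Q * u) * ((1 / u) ^ i - (Q * u / P) ^ i) := by
  have hu' : (1 / u : ℝ) ≠ 0 := one_div_ne_zero hu
  have ha : (Q * u / P : ℝ) ≠ 0 := div_ne_zero (mul_ne_zero hQ hu) hP
  rw [zpow_add_one₀ hu', zpow_add_one₀ ha, zpow_sub_one₀ hu', zpow_sub_one₀ ha]
  have h1 : ((1 / u : ℝ))⁻¹ = u := by field_simp
  have h2 : ((Q * u / P : ℝ))⁻¹ = P / (Q * u) := by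
    field_simp
  rw [h1, h2]
  field_simp
  ring

private lemma gpos (P Q u : ℝ) (hP : 0 < P) (hQ : 0 < Q) (hu : 0 < u)
    (hlt : u ^ 2 < P / Q) (i : ℤ) (hi : 1 ≤ i) :
    0 < (1 / u) ^ i - (Q * u / P) ^ i := by
  obtain ⟨n, rfl⟩ : ∃ n : ℕ, i = (n : ℤ) := ⟨i.toNat, (Int.toNat_of_nonneg (by linarith)).symm⟩
  rw [zpow_natCast, zpow_natCast, sub_pos]
  have hn : n ≠ 0 := by
    rintro rfl; simp at hi
  apply pow_lt_pow_left₀ _ (by positivity) hn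
  rw [div_lt_div_iff₀ hP hu]
  nlinarith [(lt_div_iff₀ hQ).mp hlt]

/-- the product form `f_p(i,j) = ((1/p)^i − (p₋₁,₀p/p₁,₀)^i)((1/p′)^j −
(p₀,₋₁p′/p₀,₁)^j)` is a `t`-harmonic function for the simple random walk, whenever
`p₁,₀/p + p₋₁,₀p + p₀,₁/p′ + p₀,₋₁p′ = t`, `p² < p₁,₀/p₋₁,₀` and `p′² < p₀,₁/p₀,₋₁`. -/
theorem simple_walk_product_tHarmonic
    (p10 pm10 p01 p0m1 : ℝ)
    (h1 : 0 < p10) (h2 : 0 < pm10) (h3 : 0 < p01) (h4 : 0 < p0m1)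
    (hsum : p10 + pm10 + p01 + p0m1 = 1)
    (t : ℝ) (ht : 0 < t)
    (pp pp' : ℝ) (hpp : 0 < pp) (hpp' : 0 < pp')
    (heq : p10 / pp + pm10 * pp + p01 / pp' + p0m1 * pp' = t)
    (hlt : pp ^ 2 < p10 / pm10) (hlt' : pp' ^ 2 < p01 / p0m1) :
    THarmSimple p10 pm10 p01 p0m1 t (fun i j =>
      if 1 ≤ i ∧ 1 ≤ j then
        ((1 / pp) ^ i - (pm10 * pp / p10) ^ i) * ((1 / pp') ^ j - (p0m1 * pp' / p01) ^ j)
      else 0) := by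
  set g : ℤ → ℝ := fun i => (1 / pp) ^ i - (pm10 * pp / p10) ^ i with hg
  set h : ℤ → ℝ := fun j => (1 / pp') ^ j - (p0m1 * pp' / p01) ^ j with hh
  have g0 : g 0 = 0 := by simp [hg]
  have h0 : h 0 = 0 := by simp [hh]
  have hf : ∀ i j : ℤ, 0 ≤ i → 0 ≤ j →
      (if 1 ≤ i ∧ 1 ≤ j then g i * h j else 0) = g i * h j := by
    intro i j hi hj
    by_cases hc : 1 ≤ i ∧ 1 ≤ j
    · simp [hc]
    · rw [if_neg hc]
      rcases not_and_or.mp hc with hci | hcj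
      · have : i = 0 := le_antisymm (by omega) hi
        rw [this, g0, zero_mul]
      · have : j = 0 := le_antisymm (by omega) hj
        rw [this, h0, mul_zero]
  refine ⟨?_, ?_, ?_⟩
  · intro i j hi hj
    simp only
    rw [hf (i+1) j (by omega) (by omega), hf (i-1) j (by omega) (by omega),
        hf i (j+1) (by omega) (by omega), hf i (j-1) (by omega) (by omega),
        hf i j (by omega) (by omega)]
    have key1 := one_dim p10 pm10 pp h1.ne' h2.ne' hpp.ne' i
    have key2 := one_dim p01 p0m1 pp' h3.ne' h4.ne' hpp'.ne' j
    have : p10 * g (i+1) * h j + pm10 * g (i-1) * h j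
        + p01 * (g i * h (j+1)) + p0m1 * (g i * h (j-1))
        = (p10 * g (i+1) + pm10 * g (i-1)) * h j
          + (p01 * h (j+1) + p0m1 * h (j-1)) * g i := by ring
    calc p10 * (g (i+1) * h j) + pm10 * (g (i-1) * h j)
          + p01 * (g i * h (j+1)) + p0m1 * (g i * h (j-1))
        = (p10 * g (i+1) + pm10 * g (i-1)) * h j
          + (p01 * h (j+1) + p0m1 * h (j-1)) * g i := by ring
      _ = ((p10 / pp + pm10 * pp) * g i) * h j
          + ((p01 / pp' + p0m1 * pp') * h j) * g i := by rw [key1, key2]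
      _ = t * (g i * h j) := by rw [← heq]; ring
  · intro i j hi hj
    simp only
    rw [if_pos (And.intro hi hj)]
    exact mul_pos (gpos p10 pm10 pp h1 h2 hpp hlt i hi) (gpos p01 p0m1 pp' h3 h4 hpp' hlt' j hj)
  · intro i j hij
    simp only
    rw [if_neg]
    rintro ⟨hi, hj⟩
    omega
end

section
/- Let t > 0. (i) If p, p′ > 0 satisfy p′² = p_{0,1}/p_{0,-1}, p² < p_{1,0}/p_{-1,0}, and p_{1,0}/p + p_{-1,0}·p + 2√(p_{0,1}·p_{0,-1}) = t, then the function f defined by f(i,j) = ((1/p)^i − (p_{-1,0}·p/p_{1,0})^i)·j·(1/p′)^j for i, j ≥ 1 and f(i,j) = 0 whenever i ≤ 0 or j ≤ 0 is a t-harmonic function. (ii) Symmetrically, if p, p′ > 0 satisfy p² = p_{1,0}/p_{-1,0}, p′² < p_{0,1}/p_{0,-1}, and 2√(p_{1,0}·p_{-1,0}) + p_{0,1}/p′ + p_{0,-1}·p′ = t, then the function f defined by f(i,j) = i·(1/p)^i·((1/p′)^j − (p_{0,-1}·p′/p_{0,1})^j) for i, j ≥ 1 and f(i,j) = 0 whenever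 i ≤ 0 or j ≤ 0 is a t-harmonic function. -/
private lemma key_ring1 (p10 pm10 p01 p0m1 a b s A B S jr t : ℝ)
    (hb : p10 * b + pm10 * b⁻¹ = p10 * a + pm10 * a⁻¹)
    (hs : p01 * s = p0m1 * s⁻¹)
    (ht : t = p10 * a + pm10 * a⁻¹ + (p01 * s + p0m1 * s⁻¹)) :
    p10 * ((A * a - B * b) * (jr * S)) + pm10 * ((A * a⁻¹ - B * b⁻¹) * (jr * S))
      + p01 * ((A - B) * ((jr + 1) * (S * s)))
      + p0m1 * ((A - B) * ((jr - 1) * (S * s⁻¹)))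
      = t * ((A - B) * (jr * S)) := by
  subst ht
  linear_combination (-(jr * S * B)) * hb + ((A - B) * S) * hs

private lemma key_ring2 (p10 pm10 p01 p0m1 a s c A S C ir t : ℝ)
    (hc : p01 * c + p0m1 * c⁻¹ = p01 * s + p0m1 * s⁻¹)
    (ha : p10 * a = pm10 * a⁻¹)
    (ht : t = p10 * a + pm10 * a⁻¹ + (p01 * s + p0m1 * s⁻¹)) :
    p10 * (((ir + 1) * (A * a)) * (S - C)) + pm10 * (((ir - 1) * (A * a⁻¹)) * (S - C))
      + p01 * ((ir * A) * (S * s - C * c))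
      + p0m1 * ((ir * A) * (S * s⁻¹ - C * c⁻¹))
      = t * ((ir * A) * (S - C)) := by
  subst ht
  linear_combination (-(ir * A * C)) * hc + ((S - C) * A) * ha

private lemma ite_val1 (a b s : ℝ) (i j : ℤ) (hi : 0 ≤ i) (hj : 0 ≤ j) :
    (if 1 ≤ i ∧ 1 ≤ j then (a ^ i - b ^ i) * ((j : ℝ) * s ^ j) else 0)
      = (a ^ i - b ^ i) * ((j : ℝ) * s ^ j) := by
  split
  · rfl
  · rename_i h
    rcases (by omega : i = 0 ∨ j = 0) with rfl | rfl <;> simp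

private lemma ite_val2 (a s c : ℝ) (i j : ℤ) (hi : 0 ≤ i) (hj : 0 ≤ j) :
    (if 1 ≤ i ∧ 1 ≤ j then ((i : ℝ) * a ^ i) * (s ^ j - c ^ j) else 0)
      = ((i : ℝ) * a ^ i) * (s ^ j - c ^ j) := by
  split
  · rfl
  · rename_i h
    rcases (by omega : i = 0 ∨ j = 0) with rfl | rfl <;> simp

private lemma zpow_sub_pos (a b : ℝ) (hb : 0 < b) (hba : b < a) (i : ℤ) (hi : 1 ≤ i) :
    0 < a ^ i - b ^ i := by
  lift i to ℕ using (by omega : (0:ℤ) ≤ i)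
  rw [zpow_natCast, zpow_natCast, sub_pos]
  have hi' : i ≠ 0 := Nat.one_le_iff_ne_zero.mp (by exact_mod_cast hi)
  exact pow_lt_pow_left₀ hba hb.le hi'

/-- the two degenerate forms (with a linear factor `j(1/p′)^j`, resp.
`i(1/p)^i`) are `t`-harmonic functions for the simple random walk. -/
theorem simple_walk_degenerate_tHarmonic
    (p10 pm10 p01 p0m1 : ℝ)
    (h1 : 0 < p10) (h2 : 0 < pm10) (h3 : 0 < p01) (h4 : 0 < p0m1)
    (hsum : p10 + pm10 + p01 + p0m1 = 1)
    (t : ℝ) (ht : 0 < t) :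
    (∀ pp pp' : ℝ, 0 < pp → 0 < pp' →
      pp' ^ 2 = p01 / p0m1 → pp ^ 2 < p10 / pm10 →
      p10 / pp + pm10 * pp + 2 * Real.sqrt (p01 * p0m1) = t →
      THarmSimple p10 pm10 p01 p0m1 t (fun i j =>
        if 1 ≤ i ∧ 1 ≤ j then
          ((1 / pp) ^ i - (pm10 * pp / p10) ^ i) * ((j : ℝ) * (1 / pp') ^ j)
        else 0)) ∧
    (∀ pp pp' : ℝ, 0 < pp → 0 < pp' →
      pp ^ 2 = p10 / pm10 → pp' ^ 2 < p01 / p0m1 →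
      2 * Real.sqrt (p10 * pm10) + p01 / pp' + p0m1 * pp' = t →
      THarmSimple p10 pm10 p01 p0m1 t (fun i j =>
        if 1 ≤ i ∧ 1 ≤ j then
          ((i : ℝ) * (1 / pp) ^ i) * ((1 / pp') ^ j - (p0m1 * pp' / p01) ^ j)
        else 0)) := by
  constructor
  · intro pp pp' hpp hpp' hq hlt hteq
    have ha0 : (1 / pp : ℝ) ≠ 0 := by positivity
    have hb0 : (pm10 * pp / p10 : ℝ) ≠ 0 := by positivity
    have hs0 : (1 / pp' : ℝ) ≠ 0 := by positivity
    have hp01 : p01 = p0m1 * pp' ^ 2 := by field_simp at hq; linarith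
    refine ⟨?_, ?_, ?_⟩
    · intro i j hi hj
      simp only
      rw [ite_val1 _ _ _ (i+1) j (by omega) (by omega),
          ite_val1 _ _ _ (i-1) j (by omega) (by omega),
          ite_val1 _ _ _ i (j+1) (by omega) (by omega),
          ite_val1 _ _ _ i (j-1) (by omega) (by omega),
          ite_val1 _ _ _ i j (by omega) (by omega)]
      have hb : p10 * (pm10 * pp / p10) + pm10 * (pm10 * pp / p10)⁻¹
          = p10 * (1 / pp) + pm10 * (1 / pp)⁻¹ := by field_simp; ring
      have hs : p01 * (1 / pp') = p0m1 * (1 / pp')⁻¹ := by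
        rw [hp01]; field_simp
      have hsq : Real.sqrt (p01 * p0m1) = p0m1 * pp' := by
        rw [hp01, show p0m1 * pp' ^ 2 * p0m1 = (p0m1 * pp') ^ 2 by ring,
          Real.sqrt_sq (by positivity)]
      have ht' : t = p10 * (1 / pp) + pm10 * (1 / pp)⁻¹
          + (p01 * (1 / pp') + p0m1 * (1 / pp')⁻¹) := by
        rw [← hteq, hsq, hp01]; field_simp; ring
      rw [zpow_add_one₀ ha0, zpow_add_one₀ hb0, zpow_sub_one₀ ha0, zpow_sub_one₀ hb0,
        zpow_add_one₀ hs0, zpow_sub_one₀ hs0]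
      push_cast
      exact key_ring1 p10 pm10 p01 p0m1 (1/pp) (pm10*pp/p10) (1/pp') _ _ _ _ t hb hs ht'
    · intro i j hi hj
      simp only [if_pos (⟨hi, hj⟩ : 1 ≤ i ∧ 1 ≤ j)]
      have hba : pm10 * pp / p10 < 1 / pp := by
        rw [div_lt_div_iff₀ h1 hpp]
        nlinarith [(lt_div_iff₀ h2).mp hlt]
      refine mul_pos (zpow_sub_pos _ _ (by positivity) hba i hi) (mul_pos ?_ ?_)
      · exact_mod_cast (by omega : (0:ℤ) < j)
      · exact zpow_pos (by positivity) j
    · intro i j h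
      simp only [if_neg (by omega : ¬(1 ≤ i ∧ 1 ≤ j))]
  · intro pp pp' hpp hpp' hq hlt hteq
    have ha0 : (1 / pp : ℝ) ≠ 0 := by positivity
    have hs0 : (1 / pp' : ℝ) ≠ 0 := by positivity
    have hc0 : (p0m1 * pp' / p01 : ℝ) ≠ 0 := by positivity
    have hp10 : p10 = pm10 * pp ^ 2 := by field_simp at hq; linarith
    refine ⟨?_, ?_, ?_⟩
    · intro i j hi hj
      simp only
      rw [ite_val2 _ _ _ (i+1) j (by omega) (by omega),
          ite_val2 _ _ _ (i-1) j (by omega) (by omega),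
          ite_val2 _ _ _ i (j+1) (by omega) (by omega),
          ite_val2 _ _ _ i (j-1) (by omega) (by omega),
          ite_val2 _ _ _ i j (by omega) (by omega)]
      have hc : p01 * (p0m1 * pp' / p01) + p0m1 * (p0m1 * pp' / p01)⁻¹
          = p01 * (1 / pp') + p0m1 * (1 / pp')⁻¹ := by field_simp; ring
      have ha : p10 * (1 / pp) = pm10 * (1 / pp)⁻¹ := by
        rw [hp10]; field_simp
      have hsq : Real.sqrt (p10 * pm10) = pm10 * pp := by
        rw [hp10, show pm10 * pp ^ 2 * pm10 = (pm10 * pp) ^ 2 by ring,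
          Real.sqrt_sq (by positivity)]
      have ht' : t = p10 * (1 / pp) + pm10 * (1 / pp)⁻¹
          + (p01 * (1 / pp') + p0m1 * (1 / pp')⁻¹) := by
        rw [← hteq, hsq, hp10]; field_simp; ring
      rw [zpow_add_one₀ ha0, zpow_sub_one₀ ha0, zpow_add_one₀ hs0, zpow_add_one₀ hc0,
        zpow_sub_one₀ hs0, zpow_sub_one₀ hc0]
      push_cast
      exact key_ring2 p10 pm10 p01 p0m1 (1/pp) (1/pp') (p0m1*pp'/p01) _ _ _ _ t hc ha ht'
    · intro i j hi hj
      simp only [if_pos (⟨hi, hj⟩ : 1 ≤ i ∧ 1 ≤ j)]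
      have hba : p0m1 * pp' / p01 < 1 / pp' := by
        rw [div_lt_div_iff₀ h3 hpp']
        nlinarith [(lt_div_iff₀ h4).mp hlt]
      refine mul_pos (mul_pos ?_ ?_) (zpow_sub_pos _ _ (by positivity) hba j hj)
      · exact_mod_cast (by omega : (0:ℤ) < i)
      · exact zpow_pos (by positivity) i
    · intro i j h
      simp only [if_neg (by omega : ¬(1 ≤ i ∧ 1 ≤ j))]
end
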